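/- Let n ≥ 0 and let (P, ≤) be a quasi-order with cofinality ℵ_{n+1} containing an ω_{n+1}-chain C unbounded in P, equipped with a binary function d : P × P → P such that d(x,y) ≥ x and d(x,y) ≥ y, and d(x',y') ≤ d(x,y) whenever x' ≤ x and y' ≤ y. Then P is a continuous increasing union P = ⋃_{α<ω_{n+1}} P_α and there exists C' ⊆ C cofinal in C such that each P_α is d-closed, downward closed, has cofinality at most ℵ_n, the order type of P_α ∩ C' is α, and P_λ ∩ C' is unbounded in P_λ for every limit λ. -/

import Mathlib

open Cardinal


set_option linter.unusedSectionVars false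
set_option linter.unusedVariables false

namespace Stmt1Aux

universe u w v

variable {P : Type u} [Preorder P]

def iterS (d : P → P → P) (S : Set P) : ℕ → Set P
  | 0 => S
  | (k+1) => iterS d S k ∪ Set.image2 d (iterS d S k) (iterS d S k)

def dcl (d : P → P → P) (S : Set P) : Set P := ⋃ k : ULift.{u} ℕ, iterS d S k.down

def low (S : Set P) : Set P := {x | ∃ y ∈ S, x ≤ y}

lemma iterS_mono_set {d : P → P → P} {S T : Set P} (h : S ⊆ T) :
    ∀ k, iterS d S k ⊆ iterS d T k := by
  intro k
  induction k with
  | zero => exact h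
  | succ k ih => exact Set.union_subset_union ih (Set.image2_subset ih ih)

lemma iterS_mono_k {d : P → P → P} {S : Set P} {k l : ℕ} (h : k ≤ l) :
    iterS d S k ⊆ iterS d S l := by
  induction l with
  | zero => simp_all
  | succ l ih =>
      rcases Nat.lt_or_ge k (l+1) with h' | h'
      · exact (ih (Nat.lt_succ_iff.1 h')).trans Set.subset_union_left
      · have : k = l + 1 := le_antisymm h h'
        subst this; rfl

lemma subset_dcl {d : P → P → P} {S : Set P} : S ⊆ dcl d S :=
  fun x hx => Set.mem_iUnion.2 ⟨ULift.up 0, hx⟩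

lemma mem_dcl {d : P → P → P} {S : Set P} {x : P} :
    x ∈ dcl d S ↔ ∃ k : ℕ, x ∈ iterS d S k := by
  simp only [dcl, Set.mem_iUnion]
  exact ⟨fun ⟨k, h⟩ => ⟨k.down, h⟩, fun ⟨k, h⟩ => ⟨ULift.up k, h⟩⟩

lemma dcl_mono {d : P → P → P} {S T : Set P} (h : S ⊆ T) : dcl d S ⊆ dcl d T := by
  intro x hx
  rcases mem_dcl.1 hx with ⟨k, hk⟩
  exact mem_dcl.2 ⟨k, iterS_mono_set h k hk⟩

lemma dclosed_dcl {d : P → P → P} {S : Set P} {x y : P}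
    (hx : x ∈ dcl d S) (hy : y ∈ dcl d S) : d x y ∈ dcl d S := by
  rcases mem_dcl.1 hx with ⟨k, hk⟩
  rcases mem_dcl.1 hy with ⟨l, hl⟩
  refine mem_dcl.2 ⟨max k l + 1, Set.subset_union_right ?_⟩
  exact Set.mem_image2_of_mem (iterS_mono_k (le_max_left k l) hk)
    (iterS_mono_k (le_max_right k l) hl)

lemma low_mono {S T : Set P} (h : S ⊆ T) : low S ⊆ low T :=
  fun x ⟨y, hy, hxy⟩ => ⟨y, h hy, hxy⟩

lemma subset_low {S : Set P} : S ⊆ low S := fun x hx => ⟨x, hx, le_refl x⟩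

lemma low_down {S : Set P} {x y : P} (hx : x ∈ low S) (h : y ≤ x) : y ∈ low S := by
  rcases hx with ⟨z, hz, hxz⟩; exact ⟨z, hz, h.trans hxz⟩

lemma mk_iterS_le {d : P → P → P} {S : Set P} {κ : Cardinal.{u}} (hκ : ℵ₀ ≤ κ)
    (hS : #S ≤ κ) : ∀ k, #(iterS d S k) ≤ κ := by
  intro k
  induction k with
  | zero => exact hS
  | succ k ih =>
      calc #(iterS d S (k+1) : Set P) ≤
          #(iterS d S k) + #(Set.image2 d (iterS d S k) (iterS d S k)) := mk_union_le _ _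
        _ ≤ κ + κ * κ := by
            refine add_le_add ih (le_trans mk_image2_le ?_)
            exact mul_le_mul' ih ih
        _ = κ + κ := by rw [mul_eq_self hκ]
        _ = κ := add_eq_self hκ

lemma mk_dcl_le {d : P → P → P} {S : Set P} {κ : Cardinal.{u}} (hκ : ℵ₀ ≤ κ)
    (hS : #S ≤ κ) : #(dcl d S) ≤ κ := by
  calc #(dcl d S) ≤ #(ULift.{u} ℕ) * ⨆ k : ULift.{u} ℕ, #(iterS d S k.down) :=
        mk_iUnion_le _
    _ ≤ ℵ₀ * κ := by
        refine mul_le_mul' ?_ (ciSup_le' fun k => mk_iterS_le hκ hS k.down)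
        simp
    _ ≤ κ * κ := mul_le_mul' hκ le_rfl
    _ = κ := mul_eq_self hκ

lemma dcl_iUnion_subset {d : P → P → P} {ι : Type*} {A : ι → Set P}
    (hdir : ∀ i j, ∃ k, A i ⊆ A k ∧ A j ⊆ A k) :
    dcl d (⋃ i, A i) ⊆ ⋃ i, dcl d (A i) := by
  have key : ∀ k, iterS d (⋃ i, A i) k ⊆ ⋃ i, iterS d (A i) k := by
    intro k
    induction k with
    | zero => exact fun x hx => hx
    | succ k ih =>
        rintro x (hx | hx)
        · rcases Set.mem_iUnion.1 (ih hx) with ⟨i, hi⟩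
          exact Set.mem_iUnion.2 ⟨i, Set.subset_union_left hi⟩
        · rcases hx with ⟨a, ha, b, hb, rfl⟩
          rcases Set.mem_iUnion.1 (ih ha) with ⟨i, hi⟩
          rcases Set.mem_iUnion.1 (ih hb) with ⟨j, hj⟩
          rcases hdir i j with ⟨m, him, hjm⟩
          refine Set.mem_iUnion.2 ⟨m, Set.subset_union_right ?_⟩
          exact Set.mem_image2_of_mem (iterS_mono_set him k hi) (iterS_mono_set hjm k hj)
  intro x hx
  rcases mem_dcl.1 hx with ⟨k, hk⟩
  rcases Set.mem_iUnion.1 (key k hk) with ⟨i, hi⟩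
  exact Set.mem_iUnion.2 ⟨i, mem_dcl.2 ⟨k, hi⟩⟩

def Xfam (σ' f : Ordinal.{w} → P) (g : Ordinal.{w} → Ordinal.{w}) (α : Ordinal.{w}) : Set P :=
  {x | ∃ β, ∃ _ : β < α, x = σ' (g β)} ∪ {x | ∃ β, ∃ _ : β < α, x = f β}

lemma Xfam_mono {σ' f : Ordinal.{w} → P} {g : Ordinal.{w} → Ordinal.{w}} {α β : Ordinal.{w}}
    (h : α ≤ β) : Xfam σ' f g α ⊆ Xfam σ' f g β := by
  rintro x (⟨γ, hγ, rfl⟩ | ⟨γ, hγ, rfl⟩)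
  · exact Or.inl ⟨γ, hγ.trans_le h, rfl⟩
  · exact Or.inr ⟨γ, hγ.trans_le h, rfl⟩

noncomputable def gfix (d : P → P → P) (Θ : Ordinal.{w}) (σ' f : Ordinal.{w} → P) :
    Ordinal.{w} → Ordinal.{w} :=
  Ordinal.lt_wf.fix (C := fun _ => Ordinal) fun α IH =>
    sInf {j | j < Θ ∧ (∀ β, ∀ h : β < α, IH β h < j) ∧
      σ' j ∉ low (dcl d ({x | ∃ β, ∃ h : β < α, x = σ' (IH β h)} ∪
        {x | ∃ β, ∃ _ : β < α, x = f β}))}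

lemma gfix_eq (d : P → P → P) (Θ : Ordinal.{w}) (σ' f : Ordinal.{w} → P) (α : Ordinal.{w}) :
    gfix d Θ σ' f α =
      sInf {j | j < Θ ∧ (∀ β, ∀ _ : β < α, gfix d Θ σ' f β < j) ∧
        σ' j ∉ low (dcl d (Xfam σ' f (gfix d Θ σ' f) α))} := by
  unfold gfix Xfam
  rw [WellFounded.fix_eq]

lemma mk_Xfam_le (σ' f : Ordinal.{w} → P) (g : Ordinal.{w} → Ordinal.{w}) {μ : Cardinal.{u}}
    (hμ : ℵ₀ ≤ μ) {α : Ordinal.{w}}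
    (hα : Cardinal.lift.{u} α.card ≤ Cardinal.lift.{w} μ) : #(Xfam σ' f g α) ≤ μ := by
  have h1 : {x | ∃ β, ∃ _ : β < α, x = σ' (g β)} =
      Set.range (fun t : α.ToType => σ' (g (((Ordinal.ToType.mk (o := α))).symm t).1)) := by
    ext x
    constructor
    · rintro ⟨β, hβ, rfl⟩
      exact ⟨(Ordinal.ToType.mk (o := α)) ⟨β, hβ⟩, by simp⟩
    · rintro ⟨t, rfl⟩
      exact ⟨_, (((Ordinal.ToType.mk (o := α))).symm t).2, rfl⟩
  have h2 : {x | ∃ β, ∃ _ : β < α, x = f β} =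
      Set.range (fun t : α.ToType => f (((Ordinal.ToType.mk (o := α))).symm t).1) := by
    ext x
    constructor
    · rintro ⟨β, hβ, rfl⟩
      exact ⟨(Ordinal.ToType.mk (o := α)) ⟨β, hβ⟩, by simp⟩
    · rintro ⟨t, rfl⟩
      exact ⟨_, (((Ordinal.ToType.mk (o := α))).symm t).2, rfl⟩
  have hr : ∀ hh : α.ToType → P, #(Set.range hh) ≤ μ := by
    intro hh
    refine Cardinal.lift_le.{w}.1 ?_
    calc Cardinal.lift.{w} #(Set.range hh) ≤ Cardinal.lift.{u} #(α.ToType) :=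
          Cardinal.mk_range_le_lift
      _ = Cardinal.lift.{u} α.card := by rw [Cardinal.mk_toType]
      _ ≤ Cardinal.lift.{w} μ := hα
  calc #(Xfam σ' f g α) ≤ #({x | ∃ β, ∃ _ : β < α, x = σ' (g β)} : Set P) +
        #({x | ∃ β, ∃ _ : β < α, x = f β} : Set P) := mk_union_le _ _
    _ ≤ μ + μ := by rw [h1, h2]; exact add_le_add (hr _) (hr _)
    _ = μ := add_eq_self hμ

lemma gfix_spec (d : P → P → P) (κ μ : Cardinal.{w}) (hκreg : κ.IsRegular)
    (hκμ : ∀ c : Cardinal.{w}, c < κ ↔ c ≤ μ) (Θ : Ordinal.{w}) (hΘeq : Θ = κ.ord)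
    (W : Type w) (hW : #W ≤ μ)
    (σ' f : Ordinal.{w} → P)
    (hmono : ∀ i j : Ordinal.{w}, i ≤ j → j < Θ → σ' i ≤ σ' j)
    (hesc : ∀ y : P, ∃ i, i < Θ ∧ ¬ σ' i ≤ y)
    (hXc : ∀ (g : Ordinal.{w} → Ordinal.{w}) (α : Ordinal.{w}), α < Θ →
      ∃ φ : W → P, ∀ y ∈ dcl d (Xfam σ' f g α), ∃ t : W, φ t = y) :
    ∀ α, α < Θ → (gfix d Θ σ' f α < Θ ∧
      (∀ β, β < α → gfix d Θ σ' f β < gfix d Θ σ' f α) ∧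
      σ' (gfix d Θ σ' f α) ∉ low (dcl d (Xfam σ' f (gfix d Θ σ' f) α))) := by
  subst hΘeq
  have hΘlim : Order.IsSuccLimit κ.ord := Cardinal.isSuccLimit_ord hκreg.aleph0_le
  have hcof : κ.ord.cof = κ := hκreg.cof_eq
  have hcard : ∀ γ : Ordinal.{w}, γ < κ.ord → γ.card ≤ μ :=
    fun γ h => (hκμ _).1 (Cardinal.lt_ord.1 h)
  have hb : ∀ y : P, ∃ i, i < κ.ord ∧ ∀ j, i ≤ j → j < κ.ord → ¬ σ' j ≤ y := by
    intro y
    obtain ⟨i, hiΘ, hi⟩ := hesc y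
    exact ⟨i, hiΘ, fun j hij hjΘ hle => hi ((hmono i j hij hjΘ).trans hle)⟩
  choose bF hbF using hb
  intro α
  induction α using Ordinal.induction with
  | h α IH =>
  intro hα
  obtain ⟨φ, hφ⟩ := hXc (gfix d κ.ord σ' f) α hα
  have hj₀ : (⨆ t : W, bF (φ t)) < κ.ord := by
    apply Ordinal.iSup_lt_ord
    · rw [hcof]; exact (hκμ _).2 hW
    · exact fun t => (hbF (φ t)).1
  have hsucc : ∀ β, β < α → Order.succ (gfix d κ.ord σ' f β) < κ.ord :=
    fun β hβ => hΘlim.succ_lt (IH β hβ (hβ.trans hα)).1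
  have hj₁ : (⨆ t : α.ToType,
      Order.succ (gfix d κ.ord σ' f (((Ordinal.ToType.mk (o := α))).symm t).1)) < κ.ord := by
    apply Ordinal.iSup_lt_ord
    · rw [hcof, Cardinal.mk_toType]; exact (hκμ _).2 (hcard α hα)
    · exact fun t => hsucc _ (((Ordinal.ToType.mk (o := α))).symm t).2
  set j := max (⨆ t : W, bF (φ t))
    (⨆ t : α.ToType,
      Order.succ (gfix d κ.ord σ' f (((Ordinal.ToType.mk (o := α))).symm t).1)) with hjdef
  have hjΘ : j < κ.ord := max_lt hj₀ hj₁
  have hjmem : j ∈ {j | j < κ.ord ∧ (∀ β, ∀ _ : β < α, gfix d κ.ord σ' f β < j) ∧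
      σ' j ∉ low (dcl d (Xfam σ' f (gfix d κ.ord σ' f) α))} := by
    refine ⟨hjΘ, ?_, ?_⟩
    · intro β hβ
      have h1 : gfix d κ.ord σ' f β <
          Order.succ (gfix d κ.ord σ' f (((Ordinal.ToType.mk (o := α))).symm
            ((Ordinal.ToType.mk (o := α)) ⟨β, hβ⟩)).1) := by
        rw [OrderIso.symm_apply_apply]
        exact Order.lt_succ _
      exact h1.trans_le (le_trans (Ordinal.le_iSup _ ((Ordinal.ToType.mk (o := α)) ⟨β, hβ⟩))
        (le_max_right _ _))
    · rintro ⟨y, hy, hle⟩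
      obtain ⟨t, rfl⟩ := hφ y hy
      have h2 : bF (φ t) ≤ j :=
        le_trans (Ordinal.le_iSup (fun t : W => bF (φ t)) t) (le_max_left _ _)
      exact (hbF (φ t)).2 j h2 hjΘ hle
  have hmem := csInf_mem (s := {j | j < κ.ord ∧ (∀ β, ∀ _ : β < α, gfix d κ.ord σ' f β < j) ∧
      σ' j ∉ low (dcl d (Xfam σ' f (gfix d κ.ord σ' f) α))}) ⟨j, hjmem⟩
  rw [gfix_eq d κ.ord σ' f α]
  exact hmem

end Stmt1Aux

namespace Stmt1Aux

universe u v w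

lemma main_aux {P : Type u} [Preorder P] (n : ℕ)
    (D : Set P) (hDcof : ∀ x : P, ∃ y ∈ D, x ≤ y) (hDcard : #D = aleph (n + 1))
    (Θv : Ordinal.{v}) (hΘvdef : Θv = (aleph (n + 1) : Cardinal.{v}).ord)
    (C : Set P) (σ : Θv.ToType → P)
    (hσmono : Monotone σ) (hσinj : Function.Injective σ) (hσrange : Set.range σ = C)
    (hCunb : ¬ ∃ b : P, ∀ c ∈ C, c ≤ b)
    (d : P → P → P)
    (hd1 : ∀ x y : P, x ≤ d x y ∧ y ≤ d x y)
    (hd2 : ∀ x x' y y' : P, x' ≤ x → y' ≤ y → d x' y' ≤ d x y)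
    (Θ : Ordinal.{w}) (hΘTdef : Θ = (aleph (n + 1) : Cardinal.{w}).ord) :
    ∃ (Pfam : Ordinal.{w} → Set P) (C' : Set P),
      C' ⊆ C ∧ (∀ c ∈ C, ∃ c' ∈ C', c ≤ c') ∧
      (∀ α β : Ordinal.{w}, α ≤ β → Pfam α ⊆ Pfam β) ∧
      (∀ lam : Ordinal.{w}, lam < Θ → Order.IsSuccLimit lam →
        Pfam lam = ⋃ α < lam, Pfam α) ∧
      (⋃ α < Θ, Pfam α) = Set.univ ∧
      (∀ α : Ordinal.{w}, α < Θ →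
        (∀ x ∈ Pfam α, ∀ y ∈ Pfam α, d x y ∈ Pfam α) ∧
        (∀ x ∈ Pfam α, ∀ y : P, y ≤ x → y ∈ Pfam α) ∧
        (∃ D ⊆ Pfam α, (∀ x ∈ Pfam α, ∃ y ∈ D, x ≤ y) ∧ #D ≤ aleph n) ∧
        (∃ e : α.ToType → P, Set.range e = Pfam α ∩ C' ∧ Function.Injective e ∧
          ∀ x y : α.ToType, x ≤ y ↔ e x ≤ e y) ∧
        (Order.IsSuccLimit α → ¬ ∃ b ∈ Pfam α, ∀ x ∈ Pfam α ∩ C', x ≤ b)) := by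
  classical
  have hκvreg : (aleph (n + 1) : Cardinal.{v}).IsRegular := by
    rw [Ordinal.add_one_eq_succ]; exact isRegular_aleph_succ _
  have hκreg : (aleph (n + 1) : Cardinal.{w}).IsRegular := by
    rw [Ordinal.add_one_eq_succ]; exact isRegular_aleph_succ _
  have hκμ : ∀ c : Cardinal.{w}, c < aleph (n + 1) ↔ c ≤ aleph n := by
    intro c
    rw [Ordinal.add_one_eq_succ, aleph_succ, Order.lt_succ_iff]
  have hμw : ℵ₀ ≤ (aleph n : Cardinal.{w}) := aleph0_le_aleph _
  have hμu : ℵ₀ ≤ (aleph n : Cardinal.{u}) := aleph0_le_aleph _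
  have hΘlim : Order.IsSuccLimit Θ := by
    rw [hΘTdef]; exact Cardinal.isSuccLimit_ord hκreg.aleph0_le
  have hcard : ∀ γ : Ordinal.{w}, γ < Θ → γ.card ≤ (aleph n : Cardinal.{w}) := by
    intro γ h
    rw [hΘTdef] at h
    exact (hκμ _).1 (Cardinal.lt_ord.1 h)
  -- nonemptiness of P
  have htne : Nonempty Θv.ToType := by
    rw [← Cardinal.mk_ne_zero_iff, hΘvdef, Cardinal.mk_ord_toType]
    exact hκvreg.pos.ne'
  have hPne : Nonempty P := ⟨σ (Classical.arbitrary _)⟩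
  -- the transfer map between universes v and w
  have hTT : Ordinal.lift.{w} Θv = Ordinal.lift.{v} Θ := by
    rw [hΘvdef, hΘTdef, Cardinal.lift_ord, Cardinal.lift_ord, Cardinal.lift_aleph,
      Cardinal.lift_aleph]
    simp
  have hτex : ∀ j : Ordinal.{w}, j < Θ → ∃ i : Ordinal.{v},
      Ordinal.lift.{w} i = Ordinal.lift.{v} j := by
    intro j hj
    exact Ordinal.mem_range_lift_of_le (le_of_lt (by rw [hTT]; exact Ordinal.lift_lt.2 hj))
  set τ : Ordinal.{w} → Ordinal.{v} :=
    fun j => if h : j < Θ then Classical.choose (hτex j h) else 0 with hτdef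
  have hτ : ∀ j : Ordinal.{w}, ∀ h : j < Θ,
      Ordinal.lift.{w} (τ j) = Ordinal.lift.{v} j := by
    intro j h
    rw [hτdef]
    simp only [dif_pos h]
    exact Classical.choose_spec (hτex j h)
  have hτlt : ∀ j : Ordinal.{w}, j < Θ → τ j < Θv := by
    intro j h
    have : Ordinal.lift.{w} (τ j) < Ordinal.lift.{w} Θv := by
      rw [hτ j h, hTT]; exact Ordinal.lift_lt.2 h
    exact Ordinal.lift_lt.1 this
  have hτmono : ∀ i j : Ordinal.{w}, i ≤ j → j < Θ → τ i ≤ τ j := by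
    intro i j hij hj
    have hi : i < Θ := lt_of_le_of_lt hij hj
    have : Ordinal.lift.{w} (τ i) ≤ Ordinal.lift.{w} (τ j) := by
      rw [hτ i hi, hτ j hj]; exact Ordinal.lift_le.2 hij
    exact Ordinal.lift_le.1 this
  have hτinj : ∀ i j : Ordinal.{w}, i < Θ → j < Θ → τ i = τ j → i = j := by
    intro i j hi hj h
    have : Ordinal.lift.{v} i = Ordinal.lift.{v} j := by
      rw [← hτ i hi, ← hτ j hj, h]
    exact Ordinal.lift_inj.1 this
  have hτsurj : ∀ i : Ordinal.{v}, i < Θv → ∃ j : Ordinal.{w}, j < Θ ∧ τ j = i := by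
    intro i hi
    obtain ⟨j, hj⟩ := Ordinal.mem_range_lift_of_le
      (le_of_lt (show Ordinal.lift.{w} i < Ordinal.lift.{v} Θ by
        rw [← hTT]; exact Ordinal.lift_lt.2 hi))
    have hjΘ : j < Θ := by
      have : Ordinal.lift.{v} j < Ordinal.lift.{v} Θ := by
        rw [hj, ← hTT]; exact Ordinal.lift_lt.2 hi
      exact Ordinal.lift_lt.1 this
    refine ⟨j, hjΘ, ?_⟩
    have : Ordinal.lift.{w} (τ j) = Ordinal.lift.{w} i := by rw [hτ j hjΘ, hj]
    exact Ordinal.lift_inj.1 this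
  -- the chain re-indexed over ordinals in universe v
  set σv : Ordinal.{v} → P :=
    fun i => if h : i < Θv then σ ((Ordinal.ToType.mk (o := Θv)) ⟨i, h⟩) else Classical.arbitrary P
    with hσvdef
  have hσvval : ∀ i (h : i < Θv), σv i = σ ((Ordinal.ToType.mk (o := Θv)) ⟨i, h⟩) := by
    intro i h; rw [hσvdef]; simp [h]
  have hσvC : ∀ i, i < Θv → σv i ∈ C := by
    intro i h; rw [hσvval i h, ← hσrange]; exact Set.mem_range_self _
  have hσvmono : ∀ i j : Ordinal.{v}, i ≤ j → j < Θv → σv i ≤ σv j := by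
    intro i j hij hj
    have hi : i < Θv := lt_of_le_of_lt hij hj
    rw [hσvval i hi, hσvval j hj]
    exact hσmono (((Ordinal.ToType.mk (o := Θv))).le_iff_le.2 (Subtype.mk_le_mk.2 hij))
  have hσvinj : ∀ i j : Ordinal.{v}, i < Θv → j < Θv → σv i = σv j → i = j := by
    intro i j hi hj h
    rw [hσvval i hi, hσvval j hj] at h
    have := ((Ordinal.ToType.mk (o := Θv))).injective (hσinj h)
    exact Subtype.mk_eq_mk.1 this
  have hCrepv : ∀ c ∈ C, ∃ i, i < Θv ∧ σv i = c := by
    intro c hc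
    rw [← hσrange] at hc
    obtain ⟨t, rfl⟩ := hc
    refine ⟨(((Ordinal.ToType.mk (o := Θv))).symm t).1, (((Ordinal.ToType.mk (o := Θv))).symm t).2, ?_⟩
    rw [hσvval _ (((Ordinal.ToType.mk (o := Θv))).symm t).2]
    refine congrArg σ ?_
    rw [show (⟨(((Ordinal.ToType.mk (o := Θv))).symm t).1, (((Ordinal.ToType.mk (o := Θv))).symm t).2⟩ :
      Set.Iio Θv) = ((Ordinal.ToType.mk (o := Θv))).symm t from rfl]
    exact ((Ordinal.ToType.mk (o := Θv))).apply_symm_apply t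
  have hescv : ∀ y : P, ∃ i, i < Θv ∧ ¬ σv i ≤ y := by
    intro y
    by_contra h
    push_neg at h
    refine hCunb ⟨y, fun c hc => ?_⟩
    obtain ⟨i, hi, rfl⟩ := hCrepv c hc
    exact h i hi
  -- the chain over ordinals in universe w
  set σ' : Ordinal.{w} → P := fun j => σv (τ j) with hσ'def
  have hσ'C : ∀ j, j < Θ → σ' j ∈ C := fun j h => hσvC _ (hτlt j h)
  have hσ'mono : ∀ i j : Ordinal.{w}, i ≤ j → j < Θ → σ' i ≤ σ' j := by
    intro i j hij hj
    exact hσvmono _ _ (hτmono i j hij hj) (hτlt j hj)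
  have hσ'inj : ∀ i j : Ordinal.{w}, i < Θ → j < Θ → σ' i = σ' j → i = j := by
    intro i j hi hj h
    exact hτinj i j hi hj (hσvinj _ _ (hτlt i hi) (hτlt j hj) h)
  have hCrep : ∀ c ∈ C, ∃ j, j < Θ ∧ σ' j = c := by
    intro c hc
    obtain ⟨i, hi, rfl⟩ := hCrepv c hc
    obtain ⟨j, hjΘ, rfl⟩ := hτsurj i hi
    exact ⟨j, hjΘ, rfl⟩
  have hesc : ∀ y : P, ∃ j, j < Θ ∧ ¬ σ' j ≤ y := by
    intro y
    obtain ⟨i, hi, hne⟩ := hescv y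
    obtain ⟨j, hjΘ, rfl⟩ := hτsurj i hi
    exact ⟨j, hjΘ, hne⟩
  -- lift bookkeeping for aleph
  have hswap1 : Cardinal.lift.{u} ((aleph (n+1) : Cardinal.{w})) =
      Cardinal.lift.{w} ((aleph (n+1) : Cardinal.{u})) := by
    rw [Cardinal.lift_aleph, Cardinal.lift_aleph]; simp
  have hswap2 : Cardinal.lift.{u} ((aleph n : Cardinal.{w})) =
      Cardinal.lift.{w} ((aleph n : Cardinal.{u})) := by
    rw [Cardinal.lift_aleph, Cardinal.lift_aleph]; simp
  -- the enumeration of the cofinal set D, over ordinals in universe w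
  obtain ⟨E⟩ : Nonempty (Θ.ToType ≃ ↥D) := by
    rw [← Cardinal.lift_mk_eq']
    rw [show #Θ.ToType = (aleph (n+1) : Cardinal.{w}) from by
      rw [hΘTdef, Cardinal.mk_ord_toType], hDcard]
    exact hswap1
  set f : Ordinal.{w} → P :=
    fun j => if h : j < Θ then (E ((Ordinal.ToType.mk (o := Θ)) ⟨j, h⟩) : P)
      else Classical.arbitrary P with hfdef
  have hfval : ∀ j (h : j < Θ), f j = (E ((Ordinal.ToType.mk (o := Θ)) ⟨j, h⟩) : P) := by
    intro j h; rw [hfdef]; simp [h]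
  have hfD : ∀ y ∈ D, ∃ j, j < Θ ∧ f j = y := by
    intro y hy
    refine ⟨(((Ordinal.ToType.mk (o := Θ))).symm (E.symm ⟨y, hy⟩)).1,
      (((Ordinal.ToType.mk (o := Θ))).symm (E.symm ⟨y, hy⟩)).2, ?_⟩
    rw [hfval _ (((Ordinal.ToType.mk (o := Θ))).symm (E.symm ⟨y, hy⟩)).2]
    show ((E (((Ordinal.ToType.mk (o := Θ))) (((Ordinal.ToType.mk (o := Θ))).symm (E.symm ⟨y, hy⟩)))) : P)
      = y
    rw [OrderIso.apply_symm_apply, Equiv.apply_symm_apply]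
  -- cardinality of the generated pieces
  have hdclcard : ∀ (g : Ordinal.{w} → Ordinal.{w}) (α : Ordinal.{w}), α < Θ →
      #(dcl d (Xfam σ' f g α)) ≤ (aleph n : Cardinal.{u}) := by
    intro g α hα
    refine mk_dcl_le hμu (mk_Xfam_le σ' f g hμu ?_)
    calc Cardinal.lift.{u} α.card ≤ Cardinal.lift.{u} ((aleph n : Cardinal.{w})) :=
          Cardinal.lift_le.2 (hcard α hα)
      _ = Cardinal.lift.{w} ((aleph n : Cardinal.{u})) := hswap2
  set W : Type w := (aleph n : Cardinal.{w}).ord.ToType with hWdef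
  have hW : #W ≤ (aleph n : Cardinal.{w}) := by
    rw [hWdef, Cardinal.mk_ord_toType]
  have hXc : ∀ (g : Ordinal.{w} → Ordinal.{w}) (α : Ordinal.{w}), α < Θ →
      ∃ φ : W → P, ∀ y ∈ dcl d (Xfam σ' f g α), ∃ t : W, φ t = y := by
    intro g α hα
    have hemb : Nonempty (↥(dcl d (Xfam σ' f g α)) ↪ W) := by
      rw [← Cardinal.lift_mk_le']
      calc Cardinal.lift.{w} #(dcl d (Xfam σ' f g α)) ≤
            Cardinal.lift.{w} ((aleph n : Cardinal.{u})) :=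
            Cardinal.lift_le.2 (hdclcard g α hα)
        _ = Cardinal.lift.{u} ((aleph n : Cardinal.{w})) := hswap2.symm
        _ = Cardinal.lift.{u} #W := by rw [hWdef, Cardinal.mk_ord_toType]
    obtain ⟨ψ⟩ := hemb
    refine ⟨fun t => if h : ∃ s, ψ s = t then (Classical.choose h).1
      else Classical.arbitrary P, ?_⟩
    intro y hy
    refine ⟨ψ ⟨y, hy⟩, ?_⟩
    have hex : ∃ s, ψ s = ψ ⟨y, hy⟩ := ⟨⟨y, hy⟩, rfl⟩
    simp only [dif_pos hex]
    have h2 := ψ.injective (Classical.choose_spec hex)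
    rw [h2]
  -- the recursion
  set g : Ordinal.{w} → Ordinal.{w} := gfix d Θ σ' f with hg
  have hspec : ∀ α, α < Θ → (g α < Θ ∧ (∀ β, β < α → g β < g α) ∧
      σ' (g α) ∉ low (dcl d (Xfam σ' f g α))) :=
    gfix_spec d (aleph (n+1)) (aleph n) hκreg hκμ Θ hΘTdef W hW σ' f hσ'mono hesc hXc
  set X : Ordinal.{w} → Set P := Xfam σ' f g with hX
  have hgΘ : ∀ α, α < Θ → g α < Θ := fun α h => (hspec α h).1
  have hgmono : ∀ β α : Ordinal.{w}, β < α → α < Θ → g β < g α :=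
    fun β α h hα => (hspec α hα).2.1 β h
  have hgnotin : ∀ α, α < Θ → σ' (g α) ∉ low (dcl d (X α)) := fun α h => (hspec α h).2.2
  have hgid : ∀ α, α < Θ → α ≤ g α := by
    intro α
    induction α using Ordinal.induction with
    | h α IH =>
    intro hα
    by_contra h
    push_neg at h
    have h1 : g α ≤ g (g α) := IH (g α) h (h.trans hα)
    have h2 : g (g α) < g α := hgmono (g α) α h hα
    exact absurd (h1.trans_lt h2) (lt_irrefl _)
  have K2 : ∀ β γ : Ordinal.{w}, β < γ → σ' (g β) ∈ low (dcl d (X γ)) :=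
    fun β γ h => subset_low (subset_dcl (Or.inl ⟨β, h, rfl⟩))
  have K3 : ∀ β γ : Ordinal.{w}, β < Θ → γ ≤ β → σ' (g β) ∉ low (dcl d (X γ)) :=
    fun β γ hβ hγβ hmem => hgnotin β hβ (low_mono (dcl_mono (Xfam_mono hγβ)) hmem)
  -- the pieces
  refine ⟨fun α => low (dcl d (X (min α Θ))), {x | ∃ β, ∃ _ : β < Θ, x = σ' (g β)},
    ?_, ?_, ?_, ?_, ?_, ?_⟩
  · -- C' ⊆ C
    rintro x ⟨β, hβ, rfl⟩
    exact hσ'C _ (hgΘ β hβ)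
  · -- C' cofinal in C
    intro c hc
    obtain ⟨j, hj, rfl⟩ := hCrep c hc
    exact ⟨σ' (g j), ⟨j, hj, rfl⟩, hσ'mono j (g j) (hgid j hj) (hgΘ j hj)⟩
  · -- monotone
    intro α β h
    exact low_mono (dcl_mono (Xfam_mono (min_le_min h le_rfl)))
  · -- limit continuity
    intro lam hlam hlim
    have hminl : min lam Θ = lam := min_eq_left hlam.le
    have hXeq : X lam = ⋃ β : ↥(Set.Iio lam), X β.1 := by
      apply Set.Subset.antisymm
      · rintro x (⟨β, hβ, rfl⟩ | ⟨β, hβ, rfl⟩)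
        · refine Set.mem_iUnion.2 ⟨⟨β + 1, by
            rw [Ordinal.add_one_eq_succ]; exact hlim.succ_lt hβ⟩, Or.inl ⟨β, ?_, rfl⟩⟩
          show β < β + 1
          rw [Ordinal.add_one_eq_succ]; exact Order.lt_succ β
        · refine Set.mem_iUnion.2 ⟨⟨β + 1, by
            rw [Ordinal.add_one_eq_succ]; exact hlim.succ_lt hβ⟩, Or.inr ⟨β, ?_, rfl⟩⟩
          show β < β + 1
          rw [Ordinal.add_one_eq_succ]; exact Order.lt_succ β
      · intro x hx
        obtain ⟨β, hβ⟩ := Set.mem_iUnion.1 hx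
        exact Xfam_mono β.2.le hβ
    have hdir : ∀ i j : ↥(Set.Iio lam), ∃ k : ↥(Set.Iio lam), X i.1 ⊆ X k.1 ∧ X j.1 ⊆ X k.1 :=
      fun i j => ⟨⟨max i.1 j.1, Set.mem_Iio.mpr (max_lt i.2 j.2)⟩,
        Xfam_mono (le_max_left _ _), Xfam_mono (le_max_right _ _)⟩
    ext x
    simp only [Set.mem_iUnion]
    constructor
    · rintro ⟨y, hy, hxy⟩
      rw [hminl, hXeq] at hy
      obtain ⟨β, hβ⟩ := Set.mem_iUnion.1 (dcl_iUnion_subset hdir hy)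
      refine ⟨β.1, β.2, y, ?_, hxy⟩
      rwa [min_eq_left (β.2.le.trans hlam.le)]
    · rintro ⟨α, hαlam, hx⟩
      have h1 : min α Θ ≤ min lam Θ := min_le_min hαlam.le le_rfl
      exact low_mono (dcl_mono (Xfam_mono h1)) hx
  · -- union is everything
    apply Set.eq_univ_of_forall
    intro x
    obtain ⟨y, hyD, hxy⟩ := hDcof x
    obtain ⟨j, hj, hfj⟩ := hfD y hyD
    have hj1 : j + 1 < Θ := by rw [Ordinal.add_one_eq_succ]; exact hΘlim.succ_lt hj
    have hjlt : j < j + 1 := by rw [Ordinal.add_one_eq_succ]; exact Order.lt_succ j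
    refine Set.mem_iUnion.2 ⟨j + 1, Set.mem_iUnion.2 ⟨hj1, ?_⟩⟩
    show x ∈ low (dcl d (X (min (j + 1) Θ)))
    rw [min_eq_left hj1.le]
    exact ⟨y, subset_dcl (Or.inr ⟨j, hjlt, hfj.symm⟩), hxy⟩
  · -- properties of each piece
    intro α hα
    have hmin : min α Θ = α := min_eq_left hα.le
    simp only [hmin]
    refine ⟨?_, ?_, ?_, ?_, ?_⟩
    · rintro x ⟨a, ha, hxa⟩ y ⟨b, hb, hyb⟩
      exact ⟨d a b, dclosed_dcl ha hb, hd2 a x b y hxa hyb⟩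
    · intro x hx y hyx
      exact low_down hx hyx
    · exact ⟨dcl d (X α), subset_low, fun x hx => hx, hdclcard g α hα⟩
    · -- the enumeration of Pfam α ∩ C'
      refine ⟨fun t => σ' (g (((Ordinal.ToType.mk (o := α))).symm t).1), ?_, ?_, ?_⟩
      · ext x
        constructor
        · rintro ⟨t, rfl⟩
          exact ⟨K2 _ α (((Ordinal.ToType.mk (o := α))).symm t).2,
            ⟨_, (((Ordinal.ToType.mk (o := α))).symm t).2.trans hα, rfl⟩⟩
        · rintro ⟨hPF, β, hβΘ, rfl⟩
          have hβα : β < α := by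
            by_contra h
            push_neg at h
            exact K3 β α hβΘ h hPF
          exact ⟨(Ordinal.ToType.mk (o := α)) ⟨β, hβα⟩, by simp⟩
      · intro t t' h
        have hlt : ∀ s : α.ToType, (((Ordinal.ToType.mk (o := α))).symm s).1 < Θ :=
          fun s => (((Ordinal.ToType.mk (o := α))).symm s).2.trans hα
        have hgg : g (((Ordinal.ToType.mk (o := α))).symm t).1 =
            g (((Ordinal.ToType.mk (o := α))).symm t').1 :=
          hσ'inj _ _ (hgΘ _ (hlt t)) (hgΘ _ (hlt t')) h
        have hββ : (((Ordinal.ToType.mk (o := α))).symm t).1 =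
            (((Ordinal.ToType.mk (o := α))).symm t').1 := by
          rcases lt_trichotomy (((Ordinal.ToType.mk (o := α))).symm t).1
            (((Ordinal.ToType.mk (o := α))).symm t').1 with hc | hc | hc
          · exact absurd hgg (hgmono _ _ hc (hlt t')).ne
          · exact hc
          · exact absurd hgg.symm (hgmono _ _ hc (hlt t)).ne
        exact ((Ordinal.ToType.mk (o := α))).symm.injective (Subtype.ext hββ)
      · intro x y
        have hlt : ∀ s : α.ToType, (((Ordinal.ToType.mk (o := α))).symm s).1 < Θ :=
          fun s => (((Ordinal.ToType.mk (o := α))).symm s).2.trans hα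
        constructor
        · intro hxy
          have hβ : (((Ordinal.ToType.mk (o := α))).symm x).1 ≤
              (((Ordinal.ToType.mk (o := α))).symm y).1 :=
            Subtype.coe_le_coe.2 (((Ordinal.ToType.mk (o := α))).symm.le_iff_le.2 hxy)
          rcases hβ.lt_or_eq with hc | hc
          · exact hσ'mono _ _ (hgmono _ _ hc (hlt y)).le (hgΘ _ (hlt y))
          · exact le_of_eq (congrArg (fun β => σ' (g β)) hc)
        · intro h
          by_contra hxy
          have hyx : (((Ordinal.ToType.mk (o := α))).symm y).1 <
              (((Ordinal.ToType.mk (o := α))).symm x).1 := by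
            have h3 : y < x := lt_of_not_ge hxy
            exact Subtype.coe_lt_coe.2 (((Ordinal.ToType.mk (o := α))).symm.lt_iff_lt.2 h3)
          have h1 : σ' (g (((Ordinal.ToType.mk (o := α))).symm y).1) ∈
              low (dcl d (X (((Ordinal.ToType.mk (o := α))).symm x).1)) := K2 _ _ hyx
          exact hgnotin _ (hlt x) (low_down h1 h)
    · -- limit: C' unbounded in Pfam α
      rintro hlim ⟨b, hbPF, hbub⟩
      have hXeq : X α = ⋃ β : ↥(Set.Iio α), X β.1 := by
        apply Set.Subset.antisymm
        · rintro x (⟨β, hβ, rfl⟩ | ⟨β, hβ, rfl⟩)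
          · refine Set.mem_iUnion.2 ⟨⟨β + 1, by
              rw [Ordinal.add_one_eq_succ]; exact hlim.succ_lt hβ⟩, Or.inl ⟨β, ?_, rfl⟩⟩
            show β < β + 1
            rw [Ordinal.add_one_eq_succ]; exact Order.lt_succ β
          · refine Set.mem_iUnion.2 ⟨⟨β + 1, by
              rw [Ordinal.add_one_eq_succ]; exact hlim.succ_lt hβ⟩, Or.inr ⟨β, ?_, rfl⟩⟩
            show β < β + 1
            rw [Ordinal.add_one_eq_succ]; exact Order.lt_succ β
        · intro x hx
          obtain ⟨β, hβ⟩ := Set.mem_iUnion.1 hx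
          exact Xfam_mono β.2.le hβ
      have hdir : ∀ i j : ↥(Set.Iio α), ∃ k : ↥(Set.Iio α), X i.1 ⊆ X k.1 ∧ X j.1 ⊆ X k.1 :=
        fun i j => ⟨⟨max i.1 j.1, Set.mem_Iio.mpr (max_lt i.2 j.2)⟩,
          Xfam_mono (le_max_left _ _), Xfam_mono (le_max_right _ _)⟩
      obtain ⟨y, hy, hby⟩ := hbPF
      rw [hXeq] at hy
      obtain ⟨β, hβ⟩ := Set.mem_iUnion.1 (dcl_iUnion_subset hdir hy)
      have hcmem : σ' (g β.1) ∈ low (dcl d (X α)) ∩ {x | ∃ γ, ∃ _ : γ < Θ, x = σ' (g γ)} :=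
        ⟨K2 β.1 α β.2, ⟨β.1, β.2.trans hα, rfl⟩⟩
      have hcb : σ' (g β.1) ≤ b := hbub _ hcmem
      exact hgnotin β.1 (β.2.trans hα) (low_down ⟨y, hβ, hby⟩ hcb)

end Stmt1Aux

/-- decomposition of a quasi-order of cofinality ℵ_{n+1} with an unbounded
ω_{n+1}-chain into a continuous increasing union of d-closed, downward-closed pieces of
cofinality ≤ ℵ_n, together with a cofinal C' ⊆ C such that otp(P_α ∩ C') = α and
P_λ ∩ C' is unbounded in P_λ at limits. -/
theorem stmt1 {P : Type*} [Preorder P] (n : ℕ)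
    (hcof₁ : ∃ D : Set P, (∀ x : P, ∃ y ∈ D, x ≤ y) ∧ #D = aleph (n + 1))
    (hcof₂ : ∀ D : Set P, (∀ x : P, ∃ y ∈ D, x ≤ y) → aleph (n + 1) ≤ #D)
    (C : Set P) (σ : (aleph (n + 1)).ord.ToType → P)
    (hσmono : Monotone σ) (hσinj : Function.Injective σ) (hσrange : Set.range σ = C)
    (hCunb : ¬ ∃ b : P, ∀ c ∈ C, c ≤ b)
    (d : P → P → P)
    (hd1 : ∀ x y : P, x ≤ d x y ∧ y ≤ d x y)
    (hd2 : ∀ x x' y y' : P, x' ≤ x → y' ≤ y → d x' y' ≤ d x y) :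
    ∃ (Pfam : Ordinal → Set P) (C' : Set P),
      C' ⊆ C ∧ (∀ c ∈ C, ∃ c' ∈ C', c ≤ c') ∧
      (∀ α β : Ordinal, α ≤ β → Pfam α ⊆ Pfam β) ∧
      (∀ lam : Ordinal, lam < (aleph (n + 1)).ord → Order.IsSuccLimit lam →
        Pfam lam = ⋃ α < lam, Pfam α) ∧
      (⋃ α < (aleph (n + 1)).ord, Pfam α) = Set.univ ∧
      (∀ α : Ordinal, α < (aleph (n + 1)).ord →
        (∀ x ∈ Pfam α, ∀ y ∈ Pfam α, d x y ∈ Pfam α) ∧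
        (∀ x ∈ Pfam α, ∀ y : P, y ≤ x → y ∈ Pfam α) ∧
        (∃ D ⊆ Pfam α, (∀ x ∈ Pfam α, ∃ y ∈ D, x ≤ y) ∧ #D ≤ aleph n) ∧
        (∃ e : α.ToType → P, Set.range e = Pfam α ∩ C' ∧ Function.Injective e ∧
          ∀ x y : α.ToType, x ≤ y ↔ e x ≤ e y) ∧
        (Order.IsSuccLimit α → ¬ ∃ b ∈ Pfam α, ∀ x ∈ Pfam α ∩ C', x ≤ b)) := by
  obtain ⟨D, h1, h2⟩ := hcof₁
  exact Stmt1Aux.main_aux n D h1 h2 _ rfl C σ hσmono hσinj hσrange hCunb d hd1 hd2 _ rfl
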